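/- arXiv:1611.05284 — 2 statements merged into one kernel-verified Lean document; each statement's English description precedes it below -/
import Mathlib

section
/- Let X be a complete, connected, L-linearly connected metric space with no cut points (i.e., X ∖ {p} is connected for every p ∈ X). Then for every p ∈ X and any two points x, y ∈ X ∖ {p}, there is a compact connected set C ⊆ X ∖ {p} containing both x and y. -/
/-- `X` is `L`-linearly connected. -/
def LinearlyConnected (L : ℝ) (X : Type*) [MetricSpace X] : Prop :=
  ∀ x y : X, ∃ K : Set X, IsCompact K ∧ IsConnected K ∧ x ∈ K ∧ y ∈ K ∧
    Metric.diam K ≤ L * dist x y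

/-- In a complete, connected, linearly connected space with no cut points, any two points
distinct from `p` lie in a continuum avoiding `p`. -/
theorem stmt11 {X : Type*} [MetricSpace X] [CompleteSpace X] [ConnectedSpace X]
    (L : ℝ) (hL : 1 ≤ L) (hlc : LinearlyConnected L X)
    (hcut : ∀ p : X, IsPreconnected ({p}ᶜ : Set X)) :
    ∀ (p x y : X), x ≠ p → y ≠ p →
      ∃ C : Set X, IsCompact C ∧ IsConnected C ∧ x ∈ C ∧ y ∈ C ∧ C ⊆ ({p}ᶜ : Set X) := by
  intro p x y hx hy
  have hL0 : (0:ℝ) < L := lt_of_lt_of_le one_pos hL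
  set U : Set X := {p}ᶜ with hUdef
  -- key joining lemma: nearby points are joined by a continuum avoiding p
  have join : ∀ z w : X, z ≠ p → dist z w < dist z p / (2*L) →
      ∃ K : Set X, IsCompact K ∧ IsConnected K ∧ z ∈ K ∧ w ∈ K ∧ p ∉ K := by
    intro z w hz hd
    obtain ⟨K, hKc, hKconn, hzK, hwK, hdiam⟩ := hlc z w
    refine ⟨K, hKc, hKconn, hzK, hwK, ?_⟩
    intro hpK
    have h1 : dist z p ≤ Metric.diam K := Metric.dist_le_diam_of_mem hKc.isBounded hzK hpK
    have h2 : Metric.diam K < dist z p / 2 := by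
      calc Metric.diam K ≤ L * dist z w := hdiam
        _ < L * (dist z p / (2*L)) := mul_lt_mul_of_pos_left hd hL0
        _ = dist z p / 2 := by field_simp
    have h3 : (0:ℝ) < dist z p := dist_pos.mpr hz
    linarith
  -- extension step
  have hext : ∀ z w : X, z ≠ p → dist z w < dist z p / (2*L) →
      (∃ C : Set X, IsCompact C ∧ IsConnected C ∧ x ∈ C ∧ z ∈ C ∧ C ⊆ U) →
      ∃ C : Set X, IsCompact C ∧ IsConnected C ∧ x ∈ C ∧ w ∈ C ∧ C ⊆ U := by
    rintro z w hz hd ⟨C, hCc, hCconn, hxC, hzC, hCU⟩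
    obtain ⟨K, hKc, hKconn, hzK, hwK, hpK⟩ := join z w hz hd
    refine ⟨C ∪ K, hCc.union hKc, hCconn.union ⟨z, hzC, hzK⟩ hKconn, Or.inl hxC,
      Or.inr hwK, ?_⟩
    rintro a (ha | ha)
    · exact hCU ha
    · intro h; exact hpK (by simpa using h ▸ ha)
  haveI : PreconnectedSpace U := Subtype.preconnectedSpace (hcut p)
  have hxU : x ∈ U := hx
  have hyU : y ∈ U := hy
  let T : Set U := {z | ∃ C : Set X, IsCompact C ∧ IsConnected C ∧ x ∈ C ∧ (z:X) ∈ C ∧ C ⊆ U}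
  have hne : ∀ z : U, (z:X) ≠ p := fun z => z.2
  have hTopen : IsOpen T := by
    rw [Metric.isOpen_iff]
    intro z hz
    have hzp : (0:ℝ) < dist (z:X) p := dist_pos.mpr (hne z)
    refine ⟨dist (z:X) p / (2*L), div_pos hzp (by positivity), ?_⟩
    intro w hw
    rw [Metric.mem_ball, Subtype.dist_eq, dist_comm] at hw
    exact hext (z:X) (w:X) (hne z) hw hz
  have hTcopen : IsOpen Tᶜ := by
    rw [Metric.isOpen_iff]
    intro z hz
    have hzp : (0:ℝ) < dist (z:X) p := dist_pos.mpr (hne z)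
    refine ⟨dist (z:X) p / (4*L), div_pos hzp (by positivity), ?_⟩
    intro w hw hwT
    rw [Metric.mem_ball, Subtype.dist_eq] at hw
    apply hz
    apply hext (w:X) (z:X) (hne w) ?_ hwT
    have htri := dist_triangle (z:X) (w:X) p
    have hcomm : dist (z:X) (w:X) = dist (w:X) (z:X) := dist_comm _ _
    have h4 : dist (z:X) p / (4*L) ≤ dist (z:X) p / 2 := by
      rw [div_le_div_iff₀ (by positivity) (by norm_num)]
      nlinarith
    have hwp : dist (z:X) p / 2 ≤ dist (w:X) p := by linarith
    calc dist (w:X) (z:X) < dist (z:X) p / (4*L) := hw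
      _ ≤ (dist (w:X) p * 2) / (4*L) := by
          apply div_le_div_of_nonneg_right ?_ (by positivity)
          linarith
      _ = dist (w:X) p / (2*L) := by ring
  have hclopen : IsClopen T := ⟨by simpa using hTcopen.isClosed_compl, hTopen⟩
  have hTne : T.Nonempty := ⟨⟨x, hxU⟩, ⟨{x}, isCompact_singleton, isConnected_singleton,
    rfl, rfl, by simpa using hxU⟩⟩
  have : T = Set.univ := hclopen.eq_univ hTne
  have hyT : (⟨y, hyU⟩ : U) ∈ T := this ▸ Set.mem_univ _
  obtain ⟨C, h1, h2, h3, h4, h5⟩ := hyT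
  exact ⟨C, h1, h2, h3, h4, h5⟩
end

section
/- Let Xₙ be complete metric spaces, fₙ: Xₙ → ℝ² L-Lipschitz quotient mappings, and suppose (Xₙ, pₙ, fₙ) converges in the pointed Gromov-Hausdorff sense to (X, p, f). Then f is an L-Lipschitz quotient mapping. -/
open Metric

/-- `F : X → Y` is an `L`-Lipschitz quotient mapping. -/
def IsLQ {X Y : Type*} [MetricSpace X] [MetricSpace Y] (L : ℝ) (F : X → Y) : Prop :=
  ∀ (x : X) (r : ℝ), 0 < r →
    ball (F x) (r / L) ⊆ F '' ball x r ∧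
    F '' ball x r ⊆ ball (F x) (L * r)

/-- The triples `(M,p,φ)` and `(N,q,ψ)` are `ε`-close at scale `t`. -/
def CloseTriples {M N : Type*} [MetricSpace M] [MetricSpace N]
    (ε t : ℝ) (p : M) (φ : M → EuclideanSpace ℝ (Fin 2))
    (q : N) (ψ : N → EuclideanSpace ℝ (Fin 2)) : Prop :=
  ∃ (f : M → N) (g : N → M),
    (∀ x ∈ ball p (t / ε), ∀ y ∈ ball p (t / ε), |dist (f x) (f y) - dist x y| ≤ ε * t) ∧
    (∀ x ∈ ball q (t / ε), ∀ y ∈ ball q (t / ε), |dist (g x) (g y) - dist x y| ≤ ε * t) ∧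
    dist (f p) q ≤ ε * t ∧ dist (g q) p ≤ ε * t ∧
    (∀ y ∈ ball q (t / (2 * ε)), dist (f (g y)) y ≤ ε * t) ∧
    (∀ x ∈ ball p (t / (2 * ε)), dist (g (f x)) x ≤ ε * t) ∧
    (∀ y ∈ ball q (t / ε), dist (φ (g y)) (ψ y) ≤ ε * t) ∧
    (∀ x ∈ ball p (t / ε), dist (ψ (f x)) (φ x) ≤ ε * t)

/-- A general Lipschitz bound from `IsLQ`. -/
lemma IsLQ.dist_le {X Y : Type*} [MetricSpace X] [MetricSpace Y] {L : ℝ} (hL0 : 0 < L)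
    {F : X → Y} (h : IsLQ L F) (a b : X) : dist (F a) (F b) ≤ L * dist a b := by
  apply le_of_forall_pos_le_add
  intro ε hε
  have hρ : (0:ℝ) < dist a b + ε / L := by positivity
  have hb : b ∈ ball a (dist a b + ε / L) := by
    rw [mem_ball, dist_comm]
    linarith [div_pos hε hL0]
  have := (h a (dist a b + ε / L) hρ).2 ⟨b, hb, rfl⟩
  rw [mem_ball] at this
  have heq : L * (dist a b + ε / L) = L * dist a b + ε := by
    field_simp
  rw [dist_comm (F b) (F a), heq] at this
  linarith

set_option maxHeartbeats 1000000 in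
/-- A pointed Gromov–Hausdorff limit of `L`-Lipschitz quotient maps to `ℝ²` is an
`L`-Lipschitz quotient map. -/
theorem stmt15 (L : ℝ) (hL : 1 ≤ L)
    (X : ℕ → Type*) [∀ n, MetricSpace (X n)] [∀ n, CompleteSpace (X n)]
    (p : ∀ n, X n) (f : ∀ n, X n → EuclideanSpace ℝ (Fin 2))
    (hf : ∀ n, IsLQ L (f n))
    {Y : Type*} [MetricSpace Y] [CompleteSpace Y] (q : Y)
    (F : Y → EuclideanSpace ℝ (Fin 2))
    (hconv : ∀ R ε : ℝ, 0 < R → 0 < ε → ε < 1 / 10 →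
      ∀ᶠ n in Filter.atTop, CloseTriples ε R (p n) (f n) q F) :
    IsLQ L F := by
  have hL0 : (0:ℝ) < L := lt_of_lt_of_le one_pos hL
  -- Step 1 : F satisfies the Lipschitz bound
  have hFLip : ∀ a b : Y, dist (F a) (F b) ≤ L * dist a b := by
    intro a b
    apply le_of_forall_pos_le_add
    intro ε' hε'
    set S : ℝ := dist a q + dist b q + 5 with hSdef
    have hS0 : (0:ℝ) < S := by
      have := dist_nonneg (x := a) (y := q)
      have := dist_nonneg (x := b) (y := q)
      linarith
    set ε : ℝ := min (1/20) (min (ε'/(L+3)) (1/(2*S))) with hεdef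
    have hε0 : 0 < ε := lt_min (by norm_num) (lt_min (by positivity) (by positivity))
    have hε20 : ε ≤ 1/20 := min_le_left _ _
    have hεη : ε ≤ ε'/(L+3) := le_trans (min_le_right _ _) (min_le_left _ _)
    have hεS : ε ≤ 1/(2*S) := le_trans (min_le_right _ _) (min_le_right _ _)
    have hmaster : ε * (2*S) ≤ 1 := (le_div_iff₀ (by positivity)).mp hεS
    have hinv : 2*S ≤ 1/ε := by
      rw [le_div_iff₀ hε0]; nlinarith
    obtain ⟨n, hn⟩ := (hconv 1 ε one_pos hε0 (lt_of_le_of_lt hε20 (by norm_num))).exists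
    unfold CloseTriples at hn
    obtain ⟨fm, gm, h1, h2, h3, h4, h5, h6, h7, h8⟩ := hn
    have ha_ball : a ∈ ball q (1/ε) := by
      rw [mem_ball]
      have := dist_nonneg (x := b) (y := q)
      linarith
    have hb_ball : b ∈ ball q (1/ε) := by
      rw [mem_ball]
      have := dist_nonneg (x := a) (y := q)
      linarith
    have h7a := h7 a ha_ball
    have h7b := h7 b hb_ball
    have h2ab := h2 a ha_ball b hb_ball
    have hgm : dist (gm a) (gm b) ≤ dist a b + ε := by
      have := abs_le.mp h2ab
      linarith [this.2]
    have hlip := (hf n).dist_le hL0 (gm a) (gm b)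
    have hchain : dist (F a) (F b) ≤
        dist (F a) (f n (gm a)) + dist (f n (gm a)) (f n (gm b)) + dist (f n (gm b)) (F b) :=
      dist_triangle4 _ _ _ _
    have hεfin : (L+2) * ε ≤ ε' := by
      have := (le_div_iff₀ (by positivity : (0:ℝ) < L+3)).mp hεη
      nlinarith
    have e1 : dist (F a) (f n (gm a)) ≤ ε := by
      rw [dist_comm]; simpa using h7a
    have e2 : dist (f n (gm b)) (F b) ≤ ε := by simpa using h7b
    nlinarith [mul_le_mul_of_nonneg_left hgm hL0.le]
  -- Step 2 : approximate co-Lipschitz property of F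
  have happrox : ∀ (y : Y) (z : EuclideanSpace ℝ (Fin 2)) (s η : ℝ), 0 < s → 0 < η →
      dist z (F y) < s / L → ∃ y', dist y' y < s + η ∧ dist (F y') z ≤ η := by
    intro y z s η hs hη hdz
    set S : ℝ := s + L + dist y q + 5 with hSdef
    have hS0 : (0:ℝ) < S := by
      have := dist_nonneg (x := y) (y := q); linarith
    set ε : ℝ := min (1/20) (min (η/(L+3)) (1/(2*S))) with hεdef
    have hε0 : 0 < ε := lt_min (by norm_num) (lt_min (by positivity) (by positivity))
    have hε20 : ε ≤ 1/20 := min_le_left _ _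
    have hε1 : ε ≤ 1 := le_trans hε20 (by norm_num)
    have hεη : ε ≤ η/(L+3) := le_trans (min_le_right _ _) (min_le_left _ _)
    have hεS : ε ≤ 1/(2*S) := le_trans (min_le_right _ _) (min_le_right _ _)
    have hmaster : ε * (2*S) ≤ 1 := (le_div_iff₀ (by positivity)).mp hεS
    have hinv : 2*S ≤ 1/ε := by
      rw [le_div_iff₀ hε0]; nlinarith
    have hinv2 : S ≤ 1/(2*ε) := by
      rw [le_div_iff₀ (by positivity)]; nlinarith
    obtain ⟨n, hn⟩ := (hconv 1 ε one_pos hε0 (lt_of_le_of_lt hε20 (by norm_num))).exists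
    unfold CloseTriples at hn
    obtain ⟨fm, gm, h1, h2, h3, h4, h5, h6, h7, h8⟩ := hn
    have hq_self : q ∈ ball q (1/ε) := mem_ball_self (by positivity)
    have hdyq : dist y q < S := by
      have := dist_nonneg (x := y) (y := q); linarith
    have hy_half : y ∈ ball q (1/(2*ε)) := by
      rw [mem_ball]; linarith
    have hy_ball : y ∈ ball q (1/ε) := by
      rw [mem_ball]; linarith
    have hgq : dist (gm q) (p n) ≤ ε := by simpa using h4
    have hgyq : dist (gm y) (gm q) ≤ dist y q + ε := by
      have := abs_le.mp (h2 y hy_ball q hq_self)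
      have hd : dist y q = dist y q := rfl
      nlinarith [this.2]
    have hx_d : dist (gm y) (p n) ≤ dist y q + 2*ε :=
      le_trans (dist_triangle _ (gm q) _) (by linarith)
    have hx_ball : gm y ∈ ball (p n) (1/ε) := by
      rw [mem_ball]; linarith
    have h7y : dist (f n (gm y)) (F y) ≤ ε := by simpa using h7 y hy_ball
    have hzx : dist z (f n (gm y)) < (s + L*ε) / L := by
      have ht : dist z (f n (gm y)) ≤ dist z (F y) + dist (F y) (f n (gm y)) :=
        dist_triangle _ _ _
      have h7y' : dist (F y) (f n (gm y)) ≤ ε := by rw [dist_comm]; exact h7y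
      have heq : (s + L*ε) / L = s / L + ε := by field_simp
      rw [heq]; linarith
    have hrpos : (0:ℝ) < s + L*ε := by positivity
    obtain ⟨x', hx'ball, hx'eq⟩ := (hf n (gm y) (s + L*ε) hrpos).1 (mem_ball.2 hzx)
    rw [mem_ball] at hx'ball
    have hLε : L * ε ≤ L := mul_le_of_le_one_right hL0.le hε1
    have hx'p : x' ∈ ball (p n) (1/ε) := by
      rw [mem_ball]
      have := dist_triangle x' (gm y) (p n)
      linarith
    refine ⟨fm x', ?_, ?_⟩
    · have hd1 : dist (fm x') (fm (gm y)) ≤ dist x' (gm y) + ε := by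
        have := abs_le.mp (h1 x' hx'p (gm y) hx_ball)
        nlinarith [this.2]
      have hd2 : dist (fm (gm y)) y ≤ ε := by simpa using h5 y hy_half
      have hεfin : (L+3) * ε ≤ η := by
        have := (le_div_iff₀ (by positivity : (0:ℝ) < L+3)).mp hεη
        nlinarith
      have := dist_triangle (fm x') (fm (gm y)) y
      nlinarith
    · have h8x : dist (F (fm x')) (f n x') ≤ ε := by simpa using h8 x' hx'p
      rw [hx'eq] at h8x
      have : ε ≤ η := by
        have := (le_div_iff₀ (by positivity : (0:ℝ) < L+3)).mp hεη
        nlinarith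
      linarith
  -- Step 3 : conclude
  intro y r hr
  constructor
  · -- co-Lipschitz part : iterate the approximate lifting
    intro z hz
    rw [mem_ball] at hz
    set d : ℝ := dist z (F y) with hd
    have hLd : L * d < r := by
      have := (lt_div_iff₀ hL0).mp hz
      nlinarith
    set c : ℝ := (r - L*d)/(4*L+5) with hc
    have hc0 : 0 < c := by
      apply div_pos; linarith; linarith
    -- one step of the iteration
    have key : ∀ (w : Y) (k : ℕ), ∃ w',
        dist w' w < L * dist (F w) z + 2*(c/2^k) ∧ dist (F w') z ≤ c/2^k := by
      intro w k
      have hck : (0:ℝ) < c/2^k := by positivity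
      have hspos : (0:ℝ) < L * dist (F w) z + c/2^k := by positivity
      have hlt : dist z (F w) < (L * dist (F w) z + c/2^k) / L := by
        rw [dist_comm]
        have : (L * dist (F w) z + c/2^k) / L = dist (F w) z + (c/2^k)/L := by
          field_simp
        rw [this]
        have : (0:ℝ) < (c/2^k)/L := by positivity
        linarith
      obtain ⟨w', hw1, hw2⟩ := happrox w z (L * dist (F w) z + c/2^k) (c/2^k) hspos hck hlt
      exact ⟨w', by linarith, hw2⟩
    -- build the sequence
    set u : ℕ → Y := fun n => Nat.rec y (fun k w => (key w k).choose) n with hu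
    have hu0 : u 0 = y := rfl
    have hdistu : ∀ k, dist (u (k+1)) (u k) < L * dist (F (u k)) z + 2*(c/2^k) :=
      fun k => (key (u k) k).choose_spec.1
    have hFz : ∀ k, dist (F (u (k+1))) z ≤ c/2^k :=
      fun k => (key (u k) k).choose_spec.2
    -- summable distance bounds
    set D : ℕ → ℝ := fun k => (if k = 0 then L*d else 0) + (2*L+2)*c*(1/2)^k with hD
    have hsum1 : Summable (fun k : ℕ => if k = 0 then L*d else (0:ℝ)) :=
      summable_of_ne_finset_zero (s := {0}) (by
        intro b hb
        simp only [Finset.mem_singleton] at hb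
        simp [hb])
    have hsum2 : Summable (fun k : ℕ => (2*L+2)*c*(1/2)^k) :=
      (summable_geometric_of_lt_one (by norm_num) (by norm_num)).mul_left _
    have hsum : Summable D := hsum1.add hsum2
    have htsum : tsum D = L*d + (4*L+4)*c := by
      rw [hD, Summable.tsum_add hsum1 hsum2, tsum_mul_left,
        tsum_geometric_of_lt_one (by norm_num) (by norm_num),
        tsum_eq_single 0 (fun b hb => by simp [hb])]
      norm_num; ring
    have hbound : ∀ k, dist (u k) (u (k+1)) ≤ D k := by
      intro k
      rw [dist_comm]
      cases k with
      | zero =>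
        have := hdistu 0
        have hFy0 : dist (F (u 0)) z = d := by rw [hu0, dist_comm]
        simp only [hD, if_pos rfl, pow_zero, mul_one]
        rw [hFy0] at this
        norm_num at this ⊢
        nlinarith
      | succ k =>
        have h1 := hdistu (k+1)
        have h2 := hFz k
        have hmul : L * dist (F (u (k+1))) z ≤ L * (c/2^k) :=
          mul_le_mul_of_nonneg_left h2 hL0.le
        simp only [hD, if_neg (Nat.succ_ne_zero k)]
        have hpow : (1/2:ℝ)^(k+1) = (1/2) * (1/2)^k := by ring
        have hpow2 : (1/2:ℝ)^k = 1/2^k := by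
          rw [div_pow]; norm_num
        rw [hpow, hpow2]
        have h2k : (0:ℝ) < 2^k := by positivity
        have : 2*(c/2^(k+1)) = c/2^k := by
          rw [pow_succ]; field_simp
        rw [this] at h1
        have goal : L * (c/2^k) + c/2^k = (2*L+2)*c*(1/2 * (1/2^k)) := by
          field_simp
        linarith
    have hcauchy : CauchySeq u := cauchySeq_of_dist_le_of_summable D hbound hsum
    obtain ⟨a, ha⟩ := cauchySeq_tendsto_of_complete hcauchy
    have hdista : dist (u 0) a ≤ tsum D :=
      dist_le_tsum_of_dist_le_of_tendsto₀ D hbound hsum ha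
    have hmem : a ∈ ball y r := by
      rw [mem_ball, dist_comm, ← hu0]
      have : (4*L+5)*c = r - L*d := by
        rw [hc]; field_simp
      calc dist (u 0) a ≤ tsum D := hdista
        _ = L*d + (4*L+4)*c := htsum
        _ < L*d + (4*L+5)*c := by nlinarith
        _ = r := by rw [this]; ring
    have hFa : F a = z := by
      have hFcont : Continuous F := by
        have : LipschitzWith (Real.toNNReal L) F :=
          LipschitzWith.of_dist_le_mul (fun a b => by
            rw [Real.coe_toNNReal L hL0.le]; exact hFLip a b)
        exact this.continuous
      have hsh : Filter.Tendsto (fun k => u (k+1)) Filter.atTop (nhds a) :=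
        ha.comp (Filter.tendsto_add_atTop_nat 1)
      have h1 : Filter.Tendsto (fun k => F (u (k+1))) Filter.atTop (nhds (F a)) :=
        (hFcont.tendsto a).comp hsh
      have h2 : Filter.Tendsto (fun k => F (u (k+1))) Filter.atTop (nhds z) := by
        rw [tendsto_iff_dist_tendsto_zero]
        have hcq : ∀ k : ℕ, c / 2^k = c * (1/2:ℝ)^k := by
          intro k; rw [div_pow, one_pow, mul_one_div]
        refine squeeze_zero (fun k => dist_nonneg) (fun k => (hcq k ▸ hFz k : _)) ?_
        simpa using (tendsto_pow_atTop_nhds_zero_of_lt_one (r := (1/2:ℝ))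
          (by norm_num) (by norm_num)).const_mul c
      exact tendsto_nhds_unique h1 h2
    exact ⟨a, hmem, hFa⟩
  · -- Lipschitz part
    rintro _ ⟨a, haball, rfl⟩
    rw [mem_ball] at haball ⊢
    calc dist (F a) (F y) ≤ L * dist a y := hFLip a y
      _ < L * r := by nlinarith
end
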